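/- Let G be a cograph, (T,t) an arbitrary binary cotree for G, and σ a greedy coloring of G. Then σ is an hc-coloring of G with respect to (T,t). -/
import Mathlib


/-! Basic notions: cographs, binary cotrees, hc-colorings, greedy colorings,
recursively minimal (color-minimal) colorings, and counting of hc-colorings. -/

variable {V : Type*}

/-- A cograph is a (finite simple) graph with no induced path on four vertices. -/
def IsCograph (G : SimpleGraph V) : Prop :=
  ¬ ∃ a b c d : V, a ≠ b ∧ a ≠ c ∧ a ≠ d ∧ b ≠ c ∧ b ≠ d ∧ c ≠ d ∧
      G.Adj a b ∧ G.Adj b c ∧ G.Adj c d ∧ ¬ G.Adj a c ∧ ¬ G.Adj a d ∧ ¬ G.Adj b d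

/-- Binary trees whose leaves carry vertices and whose inner nodes carry a label:
`true` = join, `false` = disjoint union. -/
inductive Cotree (V : Type*) where
  | leaf (v : V)
  | node (t : Bool) (l r : Cotree V)

/-- The set of vertices at the leaves of a cotree. -/
def Cotree.leaves : Cotree V → Set V
  | .leaf v => {v}
  | .node _ l r => Cotree.leaves l ∪ Cotree.leaves r

/-- The structural condition for a cotree to describe (an induced subgraph of) `G`:
at every inner node, the leaf sets of the two children are disjoint, and vertices
below different children are adjacent iff the node is a join (`true`) node. -/
def Cotree.Represents (G : SimpleGraph V) : Cotree V → Prop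
  | .leaf _ => True
  | .node b l r => Cotree.Represents G l ∧ Cotree.Represents G r ∧
      Disjoint (Cotree.leaves l) (Cotree.leaves r) ∧
      ∀ x ∈ Cotree.leaves l, ∀ y ∈ Cotree.leaves r, (G.Adj x y ↔ b = true)

/-- `T` is a binary cotree of the graph `G`: it records a recursive construction of
`G` by disjoint unions and joins, and its leaves are exactly the vertices of `G`. -/
def Cotree.IsCotreeOf (T : Cotree V) (G : SimpleGraph V) : Prop :=
  Cotree.Represents G T ∧ Cotree.leaves T = Set.univ

/-- `σ` is an hc-coloring with respect to the cotree `T`: at every join node the color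
sets of the two children are disjoint, and at every union node one of the two color
sets contains the other. -/
def IsHCWrt {α : Type*} (σ : V → α) : Cotree V → Prop
  | .leaf _ => True
  | .node b l r => IsHCWrt σ l ∧ IsHCWrt σ r ∧
      (b = true → Disjoint (σ '' Cotree.leaves l) (σ '' Cotree.leaves r)) ∧
      (b = false → σ '' Cotree.leaves l ⊆ σ '' Cotree.leaves r ∨
                   σ '' Cotree.leaves r ⊆ σ '' Cotree.leaves l)

/-- A greedy coloring: a proper coloring with colors `1, 2, …` such that every vertex
`v` has, for each color `c` with `1 ≤ c < σ v`, a neighbor colored `c`. -/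
def IsGreedyColoring (G : SimpleGraph V) (σ : V → ℕ) : Prop :=
  (∀ x y, G.Adj x y → σ x ≠ σ y) ∧ (∀ v, 1 ≤ σ v) ∧
    ∀ v c, 1 ≤ c → c < σ v → ∃ u, G.Adj v u ∧ σ u = c

/-- The coloring `σ` uses exactly `χ` many colors on the subgraph of `G` induced by `L`. -/
def UsesChiColors {α : Type*} (G : SimpleGraph V) (σ : V → α) (L : Set V) : Prop :=
  (((σ '' L).ncard : ℕ∞) = (G.induce L).chromaticNumber)

/-- `σ` is recursively minimal with respect to the cotree `T`: every subgraph of `G`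
arising in the recursive construction recorded by `T` is colored with the minimum
possible number of colors. -/
def IsRecMinWrt {α : Type*} (G : SimpleGraph V) (σ : V → α) : Cotree V → Prop
  | .leaf v => UsesChiColors G σ {v}
  | .node _ l r => UsesChiColors G σ (Cotree.leaves l ∪ Cotree.leaves r) ∧
      IsRecMinWrt G σ l ∧ IsRecMinWrt G σ r

/-- `σ` is a recursively minimal coloring of `G`, i.e. `(G, σ)` is color-minimal. -/
def IsRecMinColoring {α : Type*} (G : SimpleGraph V) (σ : V → α) : Prop :=
  ∃ T : Cotree V, Cotree.IsCotreeOf T G ∧ IsRecMinWrt G σ T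

/-- `s` occurs as a subtree of `T` (rooted at some vertex of `T`). -/
def Cotree.IsSubtreeOf : Cotree V → Cotree V → Prop
  | s, .leaf v => s = .leaf v
  | s, .node b l r => s = .node b l r ∨ Cotree.IsSubtreeOf s l ∨ Cotree.IsSubtreeOf s r

/-- hc-coloring condition for a coloring defined only on the vertex set `L`. -/
def IsHCOn {α : Type*} {L : Set V} (f : L → α) : Cotree V → Prop
  | .leaf _ => True
  | .node b l r => IsHCOn f l ∧ IsHCOn f r ∧
      (b = true → Disjoint (f '' (Subtype.val ⁻¹' Cotree.leaves l))
                           (f '' (Subtype.val ⁻¹' Cotree.leaves r))) ∧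
      (b = false → f '' (Subtype.val ⁻¹' Cotree.leaves l) ⊆
                     f '' (Subtype.val ⁻¹' Cotree.leaves r) ∨
                   f '' (Subtype.val ⁻¹' Cotree.leaves r) ⊆
                     f '' (Subtype.val ⁻¹' Cotree.leaves l))

/-- The number of hc-colorings of the subgraph of `G` induced by the leaves of `T`,
with respect to `T`, using colors from the fixed color set `Fin k`. -/
noncomputable def hcCount (G : SimpleGraph V) (T : Cotree V) (k : ℕ) : ℕ :=
  Set.ncard {f : ↥(Cotree.leaves T) → Fin k |
    (∀ x y : ↥(Cotree.leaves T), G.Adj ↑x ↑y → f x ≠ f y) ∧ IsHCOn f T}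

/-- The number of hc-colorings of `G` (with respect to some binary cotree of `G`),
using colors from the fixed color set `Fin k`. -/
noncomputable def hcColoringCount {W : Type*} (G : SimpleGraph W) (k : ℕ) : ℕ :=
  Set.ncard {σ : W → Fin k | (∀ x y, G.Adj x y → σ x ≠ σ y) ∧
    ∃ T : Cotree W, Cotree.IsCotreeOf T G ∧ IsHCWrt σ T}
/-- Auxiliary: in a union node, if some vertex `a` on the left has a color not used
on the right, and some vertex `b` on the right has a color not used on the left,
and `σ a < σ b`, we get a contradiction via the greedy property and the module
property of the union of the two leaf sets. -/
private lemma greedy_union_aux {V : Type*} (G : SimpleGraph V) (σ : V → ℕ)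
    (hσ : IsGreedyColoring G σ) (A B : Set V)
    (hAB : ∀ x ∈ A, ∀ y ∈ B, ¬ G.Adj x y)
    (hmod : ∀ u, u ∉ A ∪ B → (∃ x ∈ A ∪ B, G.Adj u x) → ∀ x ∈ A ∪ B, G.Adj u x)
    (a : V) (ha : a ∈ A) (haB : σ a ∉ σ '' B)
    (b : V) (hb : b ∈ B) (hbA : σ b ∉ σ '' A)
    (hlt : σ a < σ b) : False := by
  obtain ⟨hproper, hpos, hgreedy⟩ := hσ
  obtain ⟨u, hu, huc⟩ := hgreedy b (σ a) (hpos a) hlt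
  have huA : u ∉ A := fun h => hAB u h b hb hu.symm
  have huB : u ∉ B := fun h => haB ⟨u, h, huc⟩
  have : G.Adj u a := by
    refine hmod u (by simp [huA, huB]) ⟨b, Or.inr hb, hu.symm⟩ a (Or.inl ha)
  exact hproper u a this huc

/-- Auxiliary: a greedy coloring is an hc-coloring with respect to any cotree
representing `G` whose leaf set is a module of `G`. -/
private lemma greedy_isHCWrt_aux {V : Type*} (G : SimpleGraph V) (σ : V → ℕ)
    (hσ : IsGreedyColoring G σ) :
    ∀ T : Cotree V, Cotree.Represents G T →
      (∀ u, u ∉ T.leaves → (∃ x ∈ T.leaves, G.Adj u x) → ∀ x ∈ T.leaves, G.Adj u x) →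
      IsHCWrt σ T := by
  intro T
  induction T with
  | leaf v => intro _ _; trivial
  | node b l r ihl ihr =>
    intro hrep hmod
    obtain ⟨hl, hr, hdisj, hadj⟩ := hrep
    have hleaves : Cotree.leaves (Cotree.node b l r) = l.leaves ∪ r.leaves := rfl
    rw [hleaves] at hmod
    -- leaves of l form a module
    have hmodl : ∀ u, u ∉ l.leaves → (∃ x ∈ l.leaves, G.Adj u x) →
        ∀ x ∈ l.leaves, G.Adj u x := by
      intro u hu ⟨x, hx, hux⟩ y hy
      by_cases hur : u ∈ r.leaves
      · have hb : b = true := (hadj x hx u hur).mp hux.symm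
        exact ((hadj y hy u hur).mpr hb).symm
      · exact hmod u (by simp [hu, hur]) ⟨x, Or.inl hx, hux⟩ y (Or.inl hy)
    have hmodr : ∀ u, u ∉ r.leaves → (∃ x ∈ r.leaves, G.Adj u x) →
        ∀ x ∈ r.leaves, G.Adj u x := by
      intro u hu ⟨x, hx, hux⟩ y hy
      by_cases hul : u ∈ l.leaves
      · have hb : b = true := (hadj u hul x hx).mp hux
        exact (hadj u hul y hy).mpr hb
      · exact hmod u (by simp [hu, hul]) ⟨x, Or.inr hx, hux⟩ y (Or.inr hy)
    refine ⟨ihl hl hmodl, ihr hr hmodr, ?_, ?_⟩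
    · -- join case: color sets disjoint
      intro hb
      rw [Set.disjoint_left]
      rintro c ⟨x, hx, rfl⟩ ⟨y, hy, hxy⟩
      exact hσ.1 x y ((hadj x hx y hy).mpr hb) hxy.symm
    · -- union case
      intro hb
      subst hb
      have hAB : ∀ x ∈ l.leaves, ∀ y ∈ r.leaves, ¬ G.Adj x y := by
        intro x hx y hy h
        exact Bool.false_ne_true ((hadj x hx y hy).mp h)
      by_contra hcon
      push_neg at hcon
      obtain ⟨hns1, hns2⟩ := hcon
      obtain ⟨ca, ⟨a, ha, rfl⟩, haB⟩ := Set.not_subset.mp hns1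
      obtain ⟨cb, ⟨bb, hbb, rfl⟩, hbA⟩ := Set.not_subset.mp hns2
      rcases lt_trichotomy (σ a) (σ bb) with h | h | h
      · exact greedy_union_aux G σ hσ l.leaves r.leaves hAB hmod a ha haB bb hbb hbA h
      · exact haB ⟨bb, hbb, h.symm⟩
      · refine greedy_union_aux G σ hσ r.leaves l.leaves
          (fun x hx y hy hxy => hAB y hy x hx hxy.symm) ?_ bb hbb hbA a ha haB h
        intro u hu hex x hx
        exact hmod u (by simpa [or_comm] using hu)
          (by obtain ⟨z, hz, hz2⟩ := hex; exact ⟨z, Or.symm hz, hz2⟩) x (Or.symm hx)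

/-- Let `G` be a cograph, `(T,t)` an arbitrary binary cotree for `G`,
and `σ` a greedy coloring of `G`. Then `σ` is an hc-coloring of `G` w.r.t. `(T,t)`. -/
theorem greedy_coloring_isHCWrt {V : Type*} [Fintype V]
    (G : SimpleGraph V) (hG : IsCograph G)
    (T : Cotree V) (hT : Cotree.IsCotreeOf T G)
    (σ : V → ℕ) (hσ : IsGreedyColoring G σ) :
    IsHCWrt σ T := by
  refine greedy_isHCWrt_aux G σ hσ T hT.1 ?_
  intro u hu
  exact absurd (hT.2 ▸ Set.mem_univ u) hu
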